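/- Elliptical potential trace bound: let φ_1, …, φ_m ∈ ℝ^D with ‖φ_i‖ ≤ 1, and define M_0 = λ·I (λ ≥ 1) and M_i = M_{i-1} + φ_i φ_iᵀ. Then ∑_{i=1}^m φ_iᵀ M_i⁻¹ φ_i ≤ log(det(M_m)/det(M_0)). -/

import Mathlib

open Matrix

lemma det_lemma_aux {D : ℕ} (A : Matrix (Fin D) (Fin D) ℝ) (hA : IsUnit A.det)
    (u v : Fin D → ℝ) :
    (A + vecMulVec u v).det = A.det * (1 + v ⬝ᵥ A⁻¹ *ᵥ u) := by
  rw [vecMulVec_eq Unit, Matrix.det_add_replicateCol_mul_replicateRow hA]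
  congr 1
  rw [Matrix.mul_assoc, ← Matrix.replicateCol_mulVec, det_unique]
  simp [Matrix.one_apply, Matrix.replicateRow_mul_replicateCol_apply]

theorem elliptical_potential_bound (D m : ℕ) (hD : 0 < D) (hm : 0 < m)
    (lam : ℝ) (hlam : 1 ≤ lam)
    (φ : Fin m → (Fin D → ℝ)) (hφ : ∀ i, ‖(EuclideanSpace.equiv (Fin D) ℝ).symm (φ i)‖ ≤ 1)
    (M : ℕ → Matrix (Fin D) (Fin D) ℝ)
    (hM0 : M 0 = lam • (1 : Matrix (Fin D) (Fin D) ℝ))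
    (hMrec : ∀ i : Fin m, M (i + 1) = M i + vecMulVec (φ i) (φ i))
    (hMpd : ∀ i, (M i).PosDef) :
    ∑ i : Fin m, φ i ⬝ᵥ (M (i + 1))⁻¹ *ᵥ φ i
      ≤ Real.log ((M m).det / (M 0).det) := by
  have hdetpos : ∀ i, 0 < (M i).det := fun i => (hMpd i).det_pos
  -- per step bound
  have key : ∀ i : Fin m, φ i ⬝ᵥ (M (i + 1))⁻¹ *ᵥ φ i
      ≤ Real.log ((M (i + 1)).det) - Real.log ((M i).det) := by
    intro i
    set x : ℝ := φ i ⬝ᵥ (M (i + 1))⁻¹ *ᵥ φ i with hx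
    have hMi : M (i : ℕ) = M (i + 1) + vecMulVec (-(φ i)) (φ i) := by
      rw [hMrec i]
      ext a b
      simp [vecMulVec]
    have hdl := det_lemma_aux (M (i + 1)) (hdetpos _).ne'.isUnit (-(φ i)) (φ i)
    have hdl' : (M (i : ℕ)).det = (M (i + 1)).det * (1 - x) := by
      rw [hMi, hdl, Matrix.mulVec_neg, dotProduct_neg]
      ring
    have h1 : 0 < 1 - x := by
      have := hdetpos (i : ℕ)
      rw [hdl'] at this
      nlinarith [hdetpos ((i : ℕ) + 1)]
    have hr : (M (i : ℕ)).det / (M (i + 1)).det = 1 - x := by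
      rw [hdl', mul_comm, mul_div_assoc, div_self (hdetpos _).ne', mul_one]
    have hlog : Real.log (1 - x) ≤ (1 - x) - 1 := Real.log_le_sub_one_of_pos h1
    have heq : Real.log (1 - x) = Real.log (M (i : ℕ)).det - Real.log (M (i + 1)).det := by
      rw [← hr, Real.log_div (hdetpos _).ne' (hdetpos _).ne']
    linarith
  calc ∑ i : Fin m, φ i ⬝ᵥ (M (i + 1))⁻¹ *ᵥ φ i
      ≤ ∑ i : Fin m, (Real.log ((M (i + 1)).det) - Real.log ((M i).det)) :=
        Finset.sum_le_sum fun i _ => key i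
    _ = Real.log ((M m).det) - Real.log ((M 0).det) := by
        rw [Fin.sum_univ_eq_sum_range (fun i => Real.log ((M (i + 1)).det) - Real.log ((M i).det))]
        exact Finset.sum_range_sub (fun n => Real.log ((M n).det)) m
    _ = Real.log ((M m).det / (M 0).det) :=
        (Real.log_div (hdetpos m).ne' (hdetpos 0).ne').symm
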